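/- For every finite nonempty set V ⊂ ℝ, every q ∈ (2,4) and every μ > 0, one has 𝓔_{q,V}(μ) < 0 and there exists a ground state of E_{q,V} of mass μ, i.e. some u ∈ H¹_μ(ℝ) with E_{q,V}(u) = 𝓔_{q,V}(μ). -/

import Mathlib

open MeasureTheory

/-- `u` is (the continuous representative of) an `H¹(ℝ)` function with weak
derivative `u'`: both `u` and `u'` are square-integrable and `u` is a
primitive of `u'`. -/
def InH1 (u u' : ℝ → ℝ) : Prop :=
  Integrable (fun x => (u x) ^ 2) ∧ Integrable (fun x => (u' x) ^ 2) ∧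
    ∀ a b : ℝ, u b - u a = ∫ x in a..b, u' x

/-- The mass `∫_ℝ u²`. -/
noncomputable def mass (u : ℝ → ℝ) : ℝ := ∫ x : ℝ, (u x) ^ 2

/-- The energy `E_{q,V}(u) = (1/2)∫ |u'|² − (1/q)∑_{v ∈ V} |u(v)|^q`,
for a set of vertices `V ⊆ ℝ`. -/
noncomputable def energy (q : ℝ) (V : Set ℝ) (u u' : ℝ → ℝ) : ℝ :=
  (1 / 2) * (∫ x : ℝ, (u' x) ^ 2) - (1 / q) * ∑' v : V, |u (v : ℝ)| ^ q

/-- The set of energies of `H¹` functions of mass `μ`;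
its infimum is the ground-state level `𝓔_{q,V}(μ)`. -/
def levelSet (q : ℝ) (V : Set ℝ) (μ : ℝ) : Set ℝ :=
  {E | ∃ u u' : ℝ → ℝ, InH1 u u' ∧ mass u = μ ∧ E = energy q V u u'}

open Filter Topology Set intervalIntegral
open scoped RealInnerProductSpace

lemma exists_weak_limit {H : Type*} [NormedAddCommGroup H] [InnerProductSpace ℝ H]
    [CompleteSpace H] [SecondCountableTopology H]
    (f : ℕ → H) (M : ℝ) (hb : ∀ n, ‖f n‖ ≤ M) :
    ∃ (φ : ℕ → ℕ) (w : H), StrictMono φ ∧ ‖w‖ ≤ M ∧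
      ∀ g : H, Tendsto (fun k => ⟪f (φ k), g⟫) atTop (𝓝 ⟪w, g⟫) := by
  have hM : 0 ≤ M := le_trans (norm_nonneg _) (hb 0)
  have : Nonempty H := ⟨0⟩
  set e : ℕ → H := TopologicalSpace.denseSeq H with he
  have hdense : DenseRange e := TopologicalSpace.denseRange_denseSeq H
  set S : Set (ℕ → ℝ) := Set.pi Set.univ (fun n => Set.Icc (-(M*‖e n‖)) (M*‖e n‖)) with hS
  have hScomp : IsCompact S := isCompact_univ_pi (fun n => isCompact_Icc)
  have hmem : ∀ k, (fun n => ⟪f k, e n⟫) ∈ S := by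
    intro k n _
    have h1 : |⟪f k, e n⟫| ≤ ‖f k‖ * ‖e n‖ := abs_real_inner_le_norm _ _
    have h2 : ‖f k‖ * ‖e n‖ ≤ M * ‖e n‖ :=
      mul_le_mul_of_nonneg_right (hb k) (norm_nonneg _)
    constructor
    · linarith [neg_abs_le (⟪f k, e n⟫)]
    · linarith [le_abs_self (⟪f k, e n⟫)]
  obtain ⟨L, _, φ, hφ, hconv⟩ := hScomp.tendsto_subseq hmem
  have hptwise : ∀ n, Tendsto (fun k => ⟪f (φ k), e n⟫) atTop (𝓝 (L n)) := by
    intro n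
    have := tendsto_pi_nhds.1 hconv n
    simpa using this
  -- every inner product converges
  have hcau : ∀ g : H, ∃ l, Tendsto (fun k => ⟪f (φ k), g⟫) atTop (𝓝 l) := by
    intro g
    have : CauchySeq (fun k => ⟪f (φ k), g⟫) := by
      rw [Metric.cauchySeq_iff]
      intro ε hε
      obtain ⟨n, hn⟩ := Metric.denseRange_iff.1 hdense g (ε / (3 * (M + 1)))
        (by positivity)
      have hc : CauchySeq (fun k => ⟪f (φ k), e n⟫) := (hptwise n).cauchySeq
      obtain ⟨N, hN⟩ := Metric.cauchySeq_iff.1 hc (ε/3) (by positivity)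
      refine ⟨N, fun j hj k hk => ?_⟩
      have key : ∀ m : ℕ, |⟪f (φ m), g⟫ - ⟪f (φ m), e n⟫| ≤ ε / 3 := by
        intro m
        have : ⟪f (φ m), g⟫ - ⟪f (φ m), e n⟫ = ⟪f (φ m), g - e n⟫ := by
          rw [inner_sub_right]
        rw [this]
        have h1 : |⟪f (φ m), g - e n⟫| ≤ ‖f (φ m)‖ * ‖g - e n‖ := abs_real_inner_le_norm _ _
        have h2 : ‖g - e n‖ ≤ ε / (3 * (M + 1)) := by
          have := hn
          rw [dist_eq_norm] at this
          exact this.le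
        have h3 : ‖f (φ m)‖ * ‖g - e n‖ ≤ M * (ε / (3 * (M + 1))) := by
          apply mul_le_mul (hb _) h2 (norm_nonneg _) hM
        have h4 : M * (ε / (3 * (M + 1))) ≤ ε / 3 := by
          rw [mul_comm, div_mul_eq_mul_div, div_le_div_iff₀ (by positivity) (by norm_num : (0:ℝ) < 3)]
          nlinarith
        linarith
      have hjk := hN j hj k hk
      rw [Real.dist_eq] at hjk ⊢
      have := key j
      have := key k
      set a := ⟪f (φ j), g⟫
      set b := ⟪f (φ k), g⟫
      set aj := ⟪f (φ j), e n⟫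
      set bk := ⟪f (φ k), e n⟫
      have h5 : |bk - b| ≤ ε/3 := by rw [abs_sub_comm]; exact key k
      have h6 : |a - aj| ≤ ε/3 := key j
      have h7 : |aj - bk| < ε/3 := by
        have := hN j hj k hk
        rwa [Real.dist_eq] at this
      calc |a - b| ≤ |a - aj| + |aj - b| := abs_sub_le _ _ _
        _ ≤ |a - aj| + (|aj - bk| + |bk - b|) := by linarith [abs_sub_le aj bk b]
        _ < ε := by linarith
    exact cauchySeq_tendsto_of_complete this
  choose T hT using hcau
  have hTadd : ∀ g h : H, T (g + h) = T g + T h := by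
    intro g h
    refine tendsto_nhds_unique ?_ ((hT g).add (hT h))
    have : (fun k => ⟪f (φ k), g + h⟫) = fun k => ⟪f (φ k), g⟫ + ⟪f (φ k), h⟫ := by
      funext k; rw [inner_add_right]
    rw [← this]; exact hT _
  have hTsmul : ∀ (c : ℝ) (g : H), T (c • g) = c * T g := by
    intro c g
    refine tendsto_nhds_unique ?_ ((hT g).const_mul c)
    have : (fun k => ⟪f (φ k), c • g⟫) = fun k => c * ⟪f (φ k), g⟫ := by
      funext k; rw [real_inner_smul_right]
    rw [← this]; exact hT _
  have hTbound : ∀ g : H, ‖T g‖ ≤ M * ‖g‖ := by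
    intro g
    have : ∀ k, |⟪f (φ k), g⟫| ≤ M * ‖g‖ := fun k =>
      le_trans (abs_real_inner_le_norm _ _) (mul_le_mul_of_nonneg_right (hb _) (norm_nonneg _))
    have habs : Tendsto (fun k => |⟪f (φ k), g⟫|) atTop (𝓝 |T g|) := (hT g).abs
    exact le_of_tendsto habs (Eventually.of_forall this)
  set Tl : H →ₗ[ℝ] ℝ :=
    { toFun := T, map_add' := hTadd, map_smul' := hTsmul } with hTl
  set Tc : H →L[ℝ] ℝ := Tl.mkContinuous M hTbound with hTc
  set w : H := (InnerProductSpace.toDual ℝ H).symm Tc with hw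
  refine ⟨φ, w, hφ, ?_, ?_⟩
  · have h1 : ‖w‖ = ‖Tc‖ := by
      rw [hw]
      exact ((InnerProductSpace.toDual ℝ H).symm.norm_map Tc)
    rw [h1]
    exact Tl.mkContinuous_norm_le hM hTbound
  · intro g
    have : ⟪w, g⟫ = Tc g := InnerProductSpace.toDual_symm_apply
    rw [this]
    exact hT g

lemma InH1.zero_outside {u u' : ℝ → ℝ} (h : InH1 u u') {a b : ℝ}
    (hab : a ≤ b) (hbad : ¬ IntervalIntegrable u' volume a b) :
    ∀ x, x ≤ a ∨ b ≤ x → u x = 0 := by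
  obtain ⟨hu2, _, hftc⟩ := h
  have key : ∀ c d : ℝ, c ≤ a → b ≤ d → u d = u c := by
    intro c d hc hd
    have hbad' : ¬ IntervalIntegrable u' volume c d := by
      intro hII
      exact hbad (hII.mono_set (by
        rw [uIcc_of_le hab, uIcc_of_le (le_trans hc (le_trans hab hd))]
        exact Icc_subset_Icc hc hd))
    have := hftc c d
    rw [intervalIntegral.integral_undef hbad'] at this
    linarith
  have hval : ∀ x, x ≤ a ∨ b ≤ x → u x = u a := by
    intro x hx
    rcases hx with hx | hx
    · rw [← key x b hx le_rfl, key a b le_rfl le_rfl]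
    · exact key a x le_rfl hx
  have hza : u a = 0 := by
    by_contra hne
    have hEq : EqOn (fun x => (u x) ^ 2) (fun _ : ℝ => (u a) ^ 2) (Iic a) := by
      intro x hx
      simp only
      rw [hval x (Or.inl hx)]
    have hIO : IntegrableOn (fun _ : ℝ => (u a) ^ 2) (Iic a) volume :=
      (hu2.integrableOn).congr_fun hEq measurableSet_Iic
    rcases (integrableOn_const_iff).1 hIO with h0 | hfin
    · exact hne (pow_eq_zero_iff (by norm_num)|>.1 (enorm_eq_zero.1 h0))
    · rw [Real.volume_Iic] at hfin
      exact (lt_irrefl _ hfin).elim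
  intro x hx
  rw [hval x hx, hza]

lemma InH1.intervalIntegrable {u u' : ℝ → ℝ} (h : InH1 u u') {x₀ : ℝ} (hx₀ : u x₀ ≠ 0) :
    ∀ a b : ℝ, IntervalIntegrable u' volume a b := by
  have main : ∀ a b : ℝ, a ≤ b → IntervalIntegrable u' volume a b := by
    intro a b hab
    by_contra hbad
    have hz := h.zero_outside hab hbad
    have hax : a < x₀ := by
      by_contra hc
      exact hx₀ (hz x₀ (Or.inl (not_lt.1 hc)))
    have hxb : x₀ < b := by
      by_contra hc
      exact hx₀ (hz x₀ (Or.inr (not_lt.1 hc)))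
    have good1 : IntervalIntegrable u' volume a x₀ := by
      by_contra hb1
      exact hx₀ (h.zero_outside hax.le hb1 x₀ (Or.inr le_rfl))
    have good2 : IntervalIntegrable u' volume x₀ b := by
      by_contra hb2
      exact hx₀ (h.zero_outside hxb.le hb2 x₀ (Or.inl le_rfl))
    exact hbad (good1.trans good2)
  intro a b
  rcases le_total a b with hab | hba
  · exact main a b hab
  · exact (main b a hba).symm

lemma InH1.continuous {u u' : ℝ → ℝ} (h : InH1 u u')
    (hii : ∀ a b : ℝ, IntervalIntegrable u' volume a b) : Continuous u := by
  have : u = fun x => u 0 + ∫ t in (0:ℝ)..x, u' t := by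
    funext x
    have := h.2.2 0 x
    linarith
  rw [this]
  exact continuous_const.add (intervalIntegral.continuous_primitive hii 0)

lemma InH1.aesm {u u' : ℝ → ℝ} (h : InH1 u u')
    (hii : ∀ a b : ℝ, IntervalIntegrable u' volume a b) :
    AEStronglyMeasurable u' (volume : Measure ℝ) := by
  have hUnion : (⋃ n : ℕ, Ioc (-(n:ℝ)) (n:ℝ)) = univ := by
    ext x
    simp only [mem_iUnion, mem_Ioc, mem_univ, iff_true]
    obtain ⟨n, hn⟩ := exists_nat_gt |x|
    exact ⟨n, by cases abs_lt.1 hn; linarith, by cases abs_lt.1 hn; linarith⟩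
  have : AEStronglyMeasurable u' (volume.restrict (⋃ n : ℕ, Ioc (-(n:ℝ)) (n:ℝ))) := by
    rw [aestronglyMeasurable_iUnion_iff]
    intro n
    exact ((hii (-(n:ℝ)) n).1).aestronglyMeasurable
  rwa [hUnion, Measure.restrict_univ] at this

lemma InH1.memLp2 {u u' : ℝ → ℝ} (h : InH1 u u')
    (hii : ∀ a b : ℝ, IntervalIntegrable u' volume a b) :
    MemLp u' 2 (volume : Measure ℝ) :=
  (memLp_two_iff_integrable_sq (h.aesm hii)).2 h.2.1

lemma InH1.cs_bound {u u' : ℝ → ℝ} (h : InH1 u u')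
    (hii : ∀ a b : ℝ, IntervalIntegrable u' volume a b) {a b c : ℝ} (hab : a ≤ b) (hc : 0 < c) :
    |u b - u a| ≤ (c * (b - a) + (∫ x : ℝ, (u' x)^2) / c) / 2 := by
  set K := ∫ x : ℝ, (u' x)^2 with hK
  have h1 : u b - u a = ∫ x in a..b, u' x := h.2.2 a b
  rw [h1]
  have h2 : |∫ x in a..b, u' x| ≤ ∫ x in a..b, |u' x| :=
    intervalIntegral.abs_integral_le_integral_abs hab
  have hsq : IntervalIntegrable (fun x => (u' x)^2) volume a b :=
    h.2.1.intervalIntegrable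
  have hrhs : IntervalIntegrable (fun x => (c + (u' x)^2 / c)/2) volume a b :=
    ((_root_.intervalIntegrable_const).add (hsq.div_const c)).div_const 2
  have h3 : ∫ x in a..b, |u' x| ≤ ∫ x in a..b, (c + (u' x)^2 / c)/2 := by
    apply intervalIntegral.integral_mono_on hab ((hii a b).abs) hrhs
    intro x _
    have key : 2*c*|u' x| ≤ c^2 + (u' x)^2 := by
      nlinarith [sq_nonneg (c - |u' x|), sq_abs (u' x)]
    have heq : c + (u' x)^2/c = (c^2 + (u' x)^2)/c := by field_simp
    rw [heq, div_div, le_div_iff₀ (by positivity)]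
    linarith
  have h4 : ∫ x in a..b, (c + (u' x)^2 / c)/2
      = (c * (b - a) + (∫ x in a..b, (u' x)^2) / c) / 2 := by
    rw [intervalIntegral.integral_div, intervalIntegral.integral_add
      (_root_.intervalIntegrable_const) (hsq.div_const c), intervalIntegral.integral_const,
      intervalIntegral.integral_div, smul_eq_mul, mul_comm]
  have h5 : ∫ x in a..b, (u' x)^2 ≤ K := by
    rw [intervalIntegral.integral_of_le hab]
    exact setIntegral_le_integral h.2.1 (Filter.Eventually.of_forall (fun x => sq_nonneg _))
  have h6 : (∫ x in a..b, (u' x)^2) / c ≤ K / c := by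
    gcongr
  calc |∫ x in a..b, u' x| ≤ ∫ x in a..b, (c + (u' x)^2 / c)/2 := le_trans h2 h3
    _ = (c * (b - a) + (∫ x in a..b, (u' x)^2) / c) / 2 := h4
    _ ≤ (c * (b - a) + K / c) / 2 := by linarith

lemma exists_small_pt {u : ℝ → ℝ} (hcont : Continuous u)
    (hint : Integrable (fun x => (u x)^2) (volume : Measure ℝ)) {μ : ℝ}
    (hm : mass u = μ) {L : ℝ} (hL : 0 < L) (x : ℝ) :
    ∃ a ∈ Icc x (x + L), (u a)^2 ≤ μ / L := by
  have hne : (Icc x (x+L)).Nonempty := ⟨x, by constructor <;> [exact le_rfl; linarith]⟩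
  obtain ⟨a, ha, hmin⟩ := isCompact_Icc.exists_isMinOn hne
    ((hcont.pow 2).continuousOn : ContinuousOn (fun y => (u y)^2) _)
  refine ⟨a, ha, ?_⟩
  by_contra hcon
  push_neg at hcon
  have h1 : ∫ y in Icc x (x+L), (u a)^2 ≤ ∫ y in Icc x (x+L), (u y)^2 := by
    apply setIntegral_mono_on (integrableOn_const (by
      rw [Real.volume_Icc]; exact ENNReal.ofReal_ne_top)) hint.integrableOn
      measurableSet_Icc
    intro y hy
    exact hmin hy
  have h2 : ∫ y in Icc x (x+L), (u y)^2 ≤ μ := by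
    rw [← hm]
    exact setIntegral_le_integral hint (Filter.Eventually.of_forall (fun y => sq_nonneg _))
  rw [setIntegral_const, measureReal_def, Real.volume_Icc, smul_eq_mul] at h1
  have h3 : (ENNReal.ofReal (x + L - x)).toReal = L := by
    rw [ENNReal.toReal_ofReal (by linarith)]; ring
  rw [h3] at h1
  have h4 : μ < L * (u a)^2 := by
    rw [div_lt_iff₀ hL] at hcon
    linarith [hcon, mul_comm L ((u a)^2)]
  linarith

lemma InH1.pt_bound {u u' : ℝ → ℝ} (h : InH1 u u')
    (hii : ∀ a b : ℝ, IntervalIntegrable u' volume a b) (hcont : Continuous u) {μ : ℝ}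
    (hm : mass u = μ) {L : ℝ} (hL : 0 < L) (x : ℝ) :
    |u x| ≤ Real.sqrt (μ / L) + Real.sqrt L * Real.sqrt (∫ y : ℝ, (u' y)^2) := by
  set K := ∫ y : ℝ, (u' y)^2 with hK
  have hKnn : 0 ≤ K := integral_nonneg (fun y => sq_nonneg _)
  obtain ⟨a, ha, hsmall⟩ := exists_small_pt hcont h.1 hm hL x
  have haL : a - x ≤ L := by have := ha.2; linarith
  have hxa : x ≤ a := ha.1
  have hua : |u a| ≤ Real.sqrt (μ / L) := by
    have h0 : |u a| = Real.sqrt ((u a)^2) := (Real.sqrt_sq_eq_abs _).symm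
    rw [h0]
    exact Real.sqrt_le_sqrt hsmall
  have hbase : ∀ c : ℝ, 0 < c → |u x| ≤ Real.sqrt (μ / L) + (c * L + K / c)/2 := by
    intro c hc
    have hcs : |u a - u x| ≤ (c * (a - x) + K / c) / 2 := h.cs_bound hii hxa hc
    have htri : |u x| ≤ |u a| + |u a - u x| := by
      have h1 := abs_sub_abs_le_abs_sub (u x) (u a)
      have h2 : |u x - u a| = |u a - u x| := abs_sub_comm _ _
      linarith
    have hmono : (c * (a - x) + K / c) / 2 ≤ (c * L + K / c) / 2 := by
      have : c * (a - x) ≤ c * L := mul_le_mul_of_nonneg_left haL hc.le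
      linarith
    linarith
  rcases eq_or_lt_of_le hKnn with hK0 | hKpos
  · rw [← hK0, Real.sqrt_zero, mul_zero, add_zero]
    apply le_of_forall_pos_le_add
    intro ε hε
    have hb := hbase (2 * ε / L) (by positivity)
    rw [← hK0] at hb
    have h0 : (2 * ε / L * L + 0 / (2 * ε / L)) / 2 = ε := by
      field_simp
      ring
    linarith
  · have hsL : 0 < Real.sqrt L := Real.sqrt_pos.2 hL
    have hsK : 0 < Real.sqrt K := Real.sqrt_pos.2 hKpos
    have hLdiv : L / Real.sqrt L = Real.sqrt L := Real.div_sqrt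
    have hKdiv : K / Real.sqrt K = Real.sqrt K := Real.div_sqrt
    have hb := hbase (Real.sqrt K / Real.sqrt L) (by positivity)
    have hcl : Real.sqrt K / Real.sqrt L * L = Real.sqrt K * Real.sqrt L := by
      rw [div_mul_eq_mul_div, mul_div_assoc, hLdiv]
    have hkc : K / (Real.sqrt K / Real.sqrt L) = Real.sqrt K * Real.sqrt L := by
      rw [div_div_eq_mul_div, mul_comm K (Real.sqrt L), mul_div_assoc, hKdiv, mul_comm]
    rw [hcl, hkc] at hb
    have hfin : |u x| ≤ Real.sqrt (μ / L) + Real.sqrt K * Real.sqrt L := by linarith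
    linarith [hfin, mul_comm (Real.sqrt K) (Real.sqrt L)]

lemma InH1.sup_bound {u u' : ℝ → ℝ} (h : InH1 u u')
    (hii : ∀ a b : ℝ, IntervalIntegrable u' volume a b) (hcont : Continuous u) {μ : ℝ}
    (hm : mass u = μ) (hμ : 0 < μ) (x : ℝ) :
    |u x| ≤ 2 * Real.sqrt (Real.sqrt (μ * (∫ y : ℝ, (u' y)^2))) := by
  have hKnn : 0 ≤ ∫ y : ℝ, (u' y)^2 := integral_nonneg (fun y => sq_nonneg _)
  rcases eq_or_lt_of_le hKnn with hK0 | hKpos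
  · have hzero : |u x| ≤ 0 := by
      apply le_of_forall_pos_le_add
      intro ε hε
      have hL : 0 < μ / ε^2 + 1 := by positivity
      have hb := h.pt_bound hii hcont hm hL x
      rw [← hK0, Real.sqrt_zero, mul_zero, add_zero] at hb
      have harg : μ / (μ / ε^2 + 1) ≤ ε^2 := by
        rw [div_le_iff₀ hL]
        have hid : ε^2 * (μ/ε^2 + 1) = μ + ε^2 := by field_simp
        linarith [sq_nonneg ε]
      have h2 : Real.sqrt (μ / (μ / ε^2 + 1)) ≤ ε := by
        calc Real.sqrt (μ / (μ / ε^2 + 1)) ≤ Real.sqrt (ε^2) := Real.sqrt_le_sqrt harg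
          _ = ε := by rw [Real.sqrt_sq hε.le]
      linarith
    have : 0 ≤ 2 * Real.sqrt (Real.sqrt (μ * ∫ y : ℝ, (u' y)^2)) := by positivity
    linarith
  · set K := ∫ y : ℝ, (u' y)^2 with hK
    have hsμ : 0 < Real.sqrt μ := Real.sqrt_pos.2 hμ
    have hsK : 0 < Real.sqrt K := Real.sqrt_pos.2 hKpos
    have hμdiv : μ / Real.sqrt μ = Real.sqrt μ := Real.div_sqrt
    have hKdiv : K / Real.sqrt K = Real.sqrt K := Real.div_sqrt
    have hL : 0 < Real.sqrt μ / Real.sqrt K := by positivity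
    have hb := h.pt_bound hii hcont hm hL x
    have h1 : μ / (Real.sqrt μ / Real.sqrt K) = Real.sqrt μ * Real.sqrt K := by
      rw [div_div_eq_mul_div, mul_comm μ (Real.sqrt K), mul_div_assoc, hμdiv, mul_comm]
    have h2 : Real.sqrt (Real.sqrt μ / Real.sqrt K) * Real.sqrt K
        = Real.sqrt (Real.sqrt μ * Real.sqrt K) := by
      rw [← Real.sqrt_mul (by positivity) K]
      congr 1
      rw [div_mul_eq_mul_div, mul_div_assoc, hKdiv]
    have h3 : Real.sqrt μ * Real.sqrt K = Real.sqrt (μ * K) :=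
      (Real.sqrt_mul hμ.le K).symm
    rw [h1, h2, h3] at hb
    linarith

lemma sublinear_bound {D r : ℝ} (hD : 0 ≤ D) (hr0 : 0 < r) (hr1 : r < 1) :
    ∃ C : ℝ, 0 ≤ C ∧ ∀ X : ℝ, 0 ≤ X → D * X ^ r ≤ X / 4 + C := by
  set A : ℝ := max 1 ((4*D) ^ ((1-r)⁻¹)) with hA
  have hA1 : 1 ≤ A := le_max_left _ _
  have hA0 : 0 ≤ A := le_trans zero_le_one hA1
  refine ⟨D * A ^ r, by positivity, ?_⟩
  intro X hX
  rcases le_or_gt X A with hXA | hAX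
  · have h1 : X ^ r ≤ A ^ r := Real.rpow_le_rpow hX hXA hr0.le
    have h2 : D * X ^ r ≤ D * A ^ r := mul_le_mul_of_nonneg_left h1 hD
    linarith
  · -- X > A ≥ 1
    have hX1 : 1 ≤ X := le_trans hA1 hAX.le
    have hXpos : 0 < X := lt_of_lt_of_le zero_lt_one hX1
    have hkey : 4 * D ≤ X ^ (1 - r) := by
      have h1 : A ^ (1-r) ≤ X ^ (1-r) := Real.rpow_le_rpow hA0 hAX.le (by linarith)
      have h2 : (4*D) ^ ((1-r)⁻¹) ≤ A := le_max_right _ _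
      have h3 : ((4*D) ^ ((1-r)⁻¹)) ^ (1-r) ≤ A ^ (1-r) :=
        Real.rpow_le_rpow (by positivity) h2 (by linarith)
      have h4 : ((4*D) ^ ((1-r)⁻¹)) ^ (1-r) = 4*D := by
        rw [← Real.rpow_mul (by positivity), inv_mul_cancel₀ (by linarith : (1:ℝ)-r ≠ 0),
          Real.rpow_one]
      rw [h4] at h3
      linarith
    have hsplit : X ^ (1-r) * X ^ r = X := by
      rw [← Real.rpow_add hXpos]
      norm_num
    have hXr : 0 ≤ X ^ r := Real.rpow_nonneg hX r
    have : 4 * D * X ^ r ≤ X ^ (1-r) * X ^ r :=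
      mul_le_mul_of_nonneg_right hkey hXr
    rw [hsplit] at this
    have hC : 0 ≤ D * A ^ r := by positivity
    linarith

lemma InH1.nonzero {u u' : ℝ → ℝ} (h : InH1 u u') {μ : ℝ} (hm : mass u = μ) (hμ : 0 < μ) :
    ∃ x₀, u x₀ ≠ 0 := by
  by_contra hc
  push_neg at hc
  have h0 : (fun x => (u x)^2) = fun _ : ℝ => (0:ℝ) := funext fun x => by rw [hc x]; ring
  have : mass u = 0 := by rw [mass, h0, integral_zero]
  linarith

lemma energy_lower_bound {V : Set ℝ} (hfin : V.Finite) {q μ : ℝ}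
    (hq : 2 < q) (hq' : q < 4) (hμ : 0 < μ) :
    ∃ C : ℝ, 0 ≤ C ∧ ∀ u u' : ℝ → ℝ, InH1 u u' → mass u = μ →
      (∫ x : ℝ, (u' x)^2) / 4 - C ≤ energy q V u u' := by
  haveI := hfin.fintype
  set n : ℕ := Fintype.card V with hn
  have hq0 : (0:ℝ) < q := by linarith
  set r : ℝ := q / 4 with hr
  have hr0 : 0 < r := by rw [hr]; positivity
  have hr1 : r < 1 := by rw [hr, div_lt_one (by norm_num)]; linarith
  set D : ℝ := ((n:ℝ) / q) * 2 ^ q * μ ^ r with hD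
  have hDnn : 0 ≤ D := by
    apply mul_nonneg (mul_nonneg (div_nonneg (Nat.cast_nonneg n) hq0.le)
      (Real.rpow_nonneg (by norm_num) q)) (Real.rpow_nonneg hμ.le r)
  obtain ⟨C, hC0, hC⟩ := sublinear_bound hDnn hr0 hr1
  refine ⟨C, hC0, ?_⟩
  intro u u' h hm
  set K := ∫ x : ℝ, (u' x)^2 with hK
  have hKnn : 0 ≤ K := integral_nonneg fun x => sq_nonneg _
  obtain ⟨x₀, hx₀⟩ := h.nonzero hm hμ
  have hii := h.intervalIntegrable hx₀
  have hcont := h.continuous hii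
  set S := 2 * Real.sqrt (Real.sqrt (μ * K)) with hS
  have hsup : ∀ v : V, |u (v:ℝ)| ^ q ≤ S ^ q := fun v =>
    Real.rpow_le_rpow (abs_nonneg _) (h.sup_bound hii hcont hm hμ (v:ℝ)) hq0.le
  have hsum : ∑' v : V, |u (v:ℝ)| ^ q ≤ (n:ℝ) * S ^ q := by
    rw [tsum_fintype]
    calc ∑ v : V, |u (v:ℝ)| ^ q ≤ (Finset.univ : Finset V).card • (S ^ q) :=
          Finset.sum_le_card_nsmul _ _ _ (fun v _ => hsup v)
      _ = (n:ℝ) * S ^ q := by rw [nsmul_eq_mul, Finset.card_univ]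
  have htnn : 0 ≤ μ * K := mul_nonneg hμ.le hKnn
  have hSq : S ^ q = 2 ^ q * (μ ^ r * K ^ r) := by
    rw [hS, Real.mul_rpow (by norm_num) (Real.sqrt_nonneg _)]
    congr 1
    have h14 : Real.sqrt (Real.sqrt (μ * K)) = (μ * K) ^ ((1:ℝ)/4) := by
      rw [Real.sqrt_eq_rpow, Real.sqrt_eq_rpow, ← Real.rpow_mul htnn]
      norm_num
    rw [h14, ← Real.rpow_mul htnn]
    have : (1:ℝ)/4 * q = r := by rw [hr]; ring
    rw [this, Real.mul_rpow hμ.le hKnn]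
  have hfinal : (1/q) * ∑' v : V, |u (v:ℝ)| ^ q ≤ D * K ^ r := by
    have h1 : (1/q) * ∑' v : V, |u (v:ℝ)| ^ q ≤ (1/q) * ((n:ℝ) * S ^ q) :=
      mul_le_mul_of_nonneg_left hsum (by positivity)
    have h2 : (1/q) * ((n:ℝ) * S ^ q) = D * K ^ r := by
      rw [hSq, hD]; ring
    linarith
  have hDK := hC K hKnn
  have : energy q V u u' = (1/2) * K - (1/q) * ∑' v : V, |u (v:ℝ)| ^ q := rfl
  rw [this]
  linarith

lemma InH1.scale {u u' : ℝ → ℝ} (h : InH1 u u') (t : ℝ) :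
    InH1 (fun x => t * u x) (fun x => t * u' x) := by
  obtain ⟨h1, h2, h3⟩ := h
  refine ⟨?_, ?_, ?_⟩
  · have he : (fun x => (t * u x)^2) = fun x => t^2 * (u x)^2 := funext fun x => by ring
    rw [he]; exact h1.const_mul _
  · have he : (fun x => (t * u' x)^2) = fun x => t^2 * (u' x)^2 := funext fun x => by ring
    rw [he]; exact h2.const_mul _
  · intro a b
    rw [intervalIntegral.integral_const_mul, ← h3 a b]
    ring

lemma mass_scale (u : ℝ → ℝ) (t : ℝ) : mass (fun x => t * u x) = t^2 * mass u := by
  rw [mass, mass]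
  have he : (fun x => (t * u x)^2) = fun x => t^2 * (u x)^2 := funext fun x => by ring
  rw [he, MeasureTheory.integral_const_mul]

lemma energy_scale (q : ℝ) (V : Set ℝ) (u u' : ℝ → ℝ) (t : ℝ) :
    energy q V (fun x => t * u x) (fun x => t * u' x)
      = t^2 * ((1/2) * ∫ x : ℝ, (u' x)^2) - |t| ^ q * ((1/q) * ∑' v : V, |u (v:ℝ)| ^ q) := by
  rw [energy]
  have he : (fun x => (t * u' x)^2) = fun x => t^2 * (u' x)^2 := funext fun x => by ring
  rw [he, MeasureTheory.integral_const_mul]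
  have hsum : ∑' v : V, |t * u (v:ℝ)| ^ q = |t| ^ q * ∑' v : V, |u (v:ℝ)| ^ q := by
    have he2 : ∀ v : V, |t * u (v:ℝ)| ^ q = |t| ^ q * |u (v:ℝ)| ^ q := by
      intro v
      rw [abs_mul, Real.mul_rpow (abs_nonneg _) (abs_nonneg _)]
    rw [tsum_congr he2, tsum_mul_left]
  rw [hsum]
  ring

lemma tent_facts {v L c : ℝ} (hL : 0 < L) (hc : 0 < c) :
    ∃ u u' : ℝ → ℝ, InH1 u u' ∧ mass u = 2*c^2*L/3 ∧ (∫ x : ℝ, (u' x)^2) = 2*c^2/L ∧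
      u v = c := by
  set u : ℝ → ℝ := fun x => c * max 0 (1 - |x - v| / L) with hu
  set g : ℝ → ℝ := fun x => (Icc (v-L) v).indicator (fun _ => c/L) x
      + (Ioc v (v+L)).indicator (fun _ => -(c/L)) x with hg
  have hLne : L ≠ 0 := hL.ne'
  -- region values of u
  have hu0 : ∀ x, x ∉ Icc (v-L) (v+L) → u x = 0 := by
    intro x hx
    rw [mem_Icc, not_and_or] at hx
    have habs : L ≤ |x - v| := by
      rcases hx with hx | hx
      · push_neg at hx
        rw [le_abs]; right; linarith
      · push_neg at hx
        rw [le_abs]; left; linarith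
    have h1 : 1 - |x - v| / L ≤ 0 := by
      have : 1 ≤ |x - v| / L := (one_le_div hL).2 habs
      linarith
    simp only [hu]
    rw [max_eq_left h1, mul_zero]
  have hul : ∀ x ∈ Icc (v-L) v, u x = c * ((x - (v-L)) / L) := by
    intro x hx
    rw [mem_Icc] at hx
    have habs : |x - v| = v - x := by
      rw [abs_of_nonpos (by linarith)]; ring
    have h1 : 0 ≤ 1 - |x - v| / L := by
      rw [habs]
      have : (v - x) / L ≤ 1 := (div_le_one hL).2 (by linarith)
      linarith
    simp only [hu]
    rw [max_eq_right h1, habs]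
    have hkey : (x - (v - L))/L = 1 - (v - x)/L := by
      rw [eq_sub_iff_add_eq, ← add_div, div_eq_one_iff_eq hLne]
      ring
    rw [hkey]
  have hur : ∀ x ∈ Icc v (v+L), u x = c * (((v+L) - x) / L) := by
    intro x hx
    rw [mem_Icc] at hx
    have habs : |x - v| = x - v := abs_of_nonneg (by linarith)
    have h1 : 0 ≤ 1 - |x - v| / L := by
      rw [habs]
      have : (x - v) / L ≤ 1 := (div_le_one hL).2 (by linarith)
      linarith
    simp only [hu]
    rw [max_eq_right h1, habs]
    have hkey : ((v + L) - x)/L = 1 - (x - v)/L := by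
      rw [eq_sub_iff_add_eq, ← add_div, div_eq_one_iff_eq hLne]
      ring
    rw [hkey]
  have huv : u v = c := by
    simp only [hu]
    rw [sub_self, abs_zero, zero_div, sub_zero, max_eq_right zero_le_one, mul_one]
  -- g integrable
  have hgint : Integrable g (volume : Measure ℝ) := by
    apply Integrable.add
    · rw [integrable_indicator_iff measurableSet_Icc]
      exact integrableOn_const (by rw [Real.volume_Icc]; exact ENNReal.ofReal_ne_top)
    · rw [integrable_indicator_iff measurableSet_Ioc]
      exact integrableOn_const (by rw [Real.volume_Ioc]; exact ENNReal.ofReal_ne_top)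
  have hgII : ∀ a b : ℝ, IntervalIntegrable g volume a b := fun a b =>
    hgint.intervalIntegrable
  -- g squared is an indicator
  have hgsq : (fun x => (g x)^2) = (Icc (v-L) (v+L)).indicator (fun _ => (c/L)^2) := by
    funext x
    by_cases h1 : x ∈ Icc (v-L) v
    · rw [mem_Icc] at h1
      have h2 : x ∉ Ioc v (v+L) := by rw [mem_Ioc]; push_neg; intro h; linarith [h1.2]
      simp only [hg]
      rw [indicator_of_mem (by rw [mem_Icc]; exact h1) (fun _ => c/L),
        indicator_of_notMem h2, indicator_of_mem (by rw [mem_Icc]; constructor <;> linarith [h1.1, h1.2]) (fun _ => (c/L)^2)]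
      ring
    · by_cases h2 : x ∈ Ioc v (v+L)
      · rw [mem_Ioc] at h2
        simp only [hg]
        rw [indicator_of_notMem h1, indicator_of_mem (by rw [mem_Ioc]; exact h2),
          indicator_of_mem (by rw [mem_Icc]; constructor <;> linarith [h2.1, h2.2]) (fun _ => (c/L)^2)]
        ring
      · have h3 : x ∉ Icc (v-L) (v+L) := by
          rw [mem_Icc] at h1 ⊢
          rw [mem_Ioc] at h2
          push_neg at h1 h2 ⊢
          intro hx1
          exact h2 (h1 hx1)
        simp only [hg]
        rw [indicator_of_notMem h1, indicator_of_notMem h2, indicator_of_notMem h3]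
        ring
  -- integral of g squared
  have hg2int : Integrable (fun x => (g x)^2) (volume : Measure ℝ) := by
    rw [hgsq]
    rw [integrable_indicator_iff measurableSet_Icc]
    exact integrableOn_const (by rw [Real.volume_Icc]; exact ENNReal.ofReal_ne_top)
  have hKval : (∫ x : ℝ, (g x)^2) = 2*c^2/L := by
    rw [hgsq, MeasureTheory.integral_indicator measurableSet_Icc, setIntegral_const, measureReal_def, Real.volume_Icc,
      smul_eq_mul, ENNReal.toReal_ofReal (by linarith : (0:ℝ) ≤ v + L - (v - L))]
    field_simp
    ring
  -- piecewise constant integrals of g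
  have hpc : ∀ a b k : ℝ, a ≤ b → (∀ t ∈ Ioo a b, g t = k) → ∫ t in a..b, g t = k * (b - a) := by
    intro a b k hab hk
    rw [intervalIntegral.integral_of_le hab, integral_Ioc_eq_integral_Ioo,
      setIntegral_congr_fun measurableSet_Ioo hk, setIntegral_const, measureReal_def, Real.volume_Ioo,
      ENNReal.toReal_ofReal (by linarith), smul_eq_mul, mul_comm]
  have F1 : ∫ t in (v-L)..v, g t = c := by
    rw [hpc (v-L) v (c/L) (by linarith) ?_]
    · field_simp; ring
    · intro t ht
      rw [mem_Ioo] at ht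
      simp only [hg]
      rw [indicator_of_mem (by rw [mem_Icc]; exact ⟨ht.1.le, ht.2.le⟩) (fun _ => c/L),
        indicator_of_notMem (by rw [mem_Ioc]; push_neg; intro hcon; linarith [ht.2])]
      ring
  have F2 : ∀ x, v ≤ x → x ≤ v + L → ∫ t in v..x, g t = -(c/L)*(x - v) := by
    intro x hx1 hx2
    rw [hpc v x (-(c/L)) hx1 ?_]
    intro t ht
    rw [mem_Ioo] at ht
    simp only [hg]
    rw [indicator_of_notMem (by rw [mem_Icc]; push_neg; intro _; linarith [ht.1]),
      indicator_of_mem (by rw [mem_Ioc]; exact ⟨ht.1, by linarith [ht.2]⟩) (fun _ => -(c/L))]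
    ring
  have F3 : ∀ x, v + L ≤ x → ∫ t in (v+L)..x, g t = 0 := by
    intro x hx
    rw [hpc (v+L) x 0 hx ?_]
    · ring
    · intro t ht
      rw [mem_Ioo] at ht
      simp only [hg]
      rw [indicator_of_notMem (by rw [mem_Icc]; push_neg; intro _; linarith [ht.1]),
        indicator_of_notMem (by rw [mem_Ioc]; push_neg; intro _; linarith [ht.1])]
      ring
  have F4 : ∀ x, x ≤ v - L → ∫ t in (v-L)..x, g t = 0 := by
    intro x hx
    rw [intervalIntegral.integral_symm, hpc x (v-L) 0 hx ?_]
    · ring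
    · intro t ht
      rw [mem_Ioo] at ht
      simp only [hg]
      rw [indicator_of_notMem (by rw [mem_Icc]; push_neg; intro hcon; linarith [ht.2]),
        indicator_of_notMem (by rw [mem_Ioc]; push_neg; intro hcon; linarith [ht.2])]
      ring
  have F0 : ∀ x, v - L ≤ x → x ≤ v → ∫ t in (v-L)..x, g t = (c/L)*(x - (v-L)) := by
    intro x hx1 hx2
    rw [hpc (v-L) x (c/L) hx1 ?_]
    intro t ht
    rw [mem_Ioo] at ht
    simp only [hg]
    rw [indicator_of_mem (by rw [mem_Icc]; exact ⟨ht.1.le, by linarith [ht.2]⟩) (fun _ => c/L),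
      indicator_of_notMem (by rw [mem_Ioc]; push_neg; intro hcon; linarith [ht.2])]
    ring
  -- u vanishes on the left/right closed rays
  have hu_le : ∀ x, x ≤ v - L → u x = 0 := by
    intro x hx
    have habs : L ≤ |x - v| := by rw [le_abs]; right; linarith
    have h1 : 1 - |x - v| / L ≤ 0 := by
      have := (one_le_div hL).2 habs
      linarith
    simp only [hu]
    rw [max_eq_left h1, mul_zero]
  have hu_ge : ∀ x, v + L ≤ x → u x = 0 := by
    intro x hx
    have habs : L ≤ |x - v| := by rw [le_abs]; left; linarith
    have h1 : 1 - |x - v| / L ≤ 0 := by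
      have := (one_le_div hL).2 habs
      linarith
    simp only [hu]
    rw [max_eq_left h1, mul_zero]
  -- the primitive of g is u
  have hprim : ∀ x, ∫ t in (v-L)..x, g t = u x := by
    intro x
    rcases le_or_gt x (v-L) with h1 | h1
    · rw [F4 x h1, hu_le x h1]
    · rcases le_or_gt x v with h2 | h2
      · rw [F0 x h1.le h2, hul x ⟨h1.le, h2⟩]
        ring
      · rcases le_or_gt x (v+L) with h3 | h3
        · rw [← intervalIntegral.integral_add_adjacent_intervals (hgII (v-L) v) (hgII v x),
            F1, F2 x h2.le h3, hur x ⟨h2.le, h3⟩]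
          field_simp
          ring
        · rw [← intervalIntegral.integral_add_adjacent_intervals (hgII (v-L) (v+L)) (hgII (v+L) x),
            ← intervalIntegral.integral_add_adjacent_intervals (hgII (v-L) v) (hgII v (v+L)),
            F1, F2 (v+L) (by linarith) le_rfl, F3 x h3.le, hu_ge x h3.le]
          field_simp
          ring
  have hftc : ∀ a b : ℝ, u b - u a = ∫ x in a..b, g x := by
    intro a b
    rw [← hprim a, ← hprim b,
      intervalIntegral.integral_interval_sub_left (hgII (v-L) b) (hgII (v-L) a)]
  -- continuity and integrability of u^2
  have hucont : Continuous u := by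
    apply continuous_const.mul
    exact continuous_const.max (continuous_const.sub
      (((continuous_id.sub continuous_const).abs).div_const L))
  have hu2int : Integrable (fun x => (u x)^2) (volume : Measure ℝ) := by
    apply Continuous.integrable_of_hasCompactSupport (hucont.pow 2)
    apply HasCompactSupport.intro (isCompact_Icc (a := v-L) (b := v+L))
    intro x hx
    simp [hu0 x hx]
  -- mass computation
  have hmass : mass u = 2*c^2*L/3 := by
    have hind : (fun x => (u x)^2) = (Icc (v-L) (v+L)).indicator (fun x => (u x)^2) := by
      funext x
      by_cases hx : x ∈ Icc (v-L) (v+L)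
      · rw [indicator_of_mem hx]
      · rw [indicator_of_notMem hx, hu0 x hx]
        ring
    have hsplit : mass u = (∫ x in (v-L)..v, (u x)^2) + ∫ x in v..(v+L), (u x)^2 := by
      have h1 : mass u = ∫ x in Icc (v-L) (v+L), (u x)^2 := by
        rw [mass]
        conv_lhs => rw [hind]
        rw [MeasureTheory.integral_indicator measurableSet_Icc]
      rw [h1, integral_Icc_eq_integral_Ioc,
        ← intervalIntegral.integral_of_le (by linarith : v - L ≤ v + L),
        ← intervalIntegral.integral_add_adjacent_intervals
          (f := fun x => (u x)^2) ((hucont.pow 2).intervalIntegrable (v-L) v)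
          ((hucont.pow 2).intervalIntegrable v (v+L))]
    have hleft : ∫ x in (v-L)..v, (u x)^2 = c^2*L/3 := by
      have heq : EqOn (fun x => (u x)^2) (fun x => (c^2/L^2) * (x - (v-L))^2)
          (Set.uIcc (v-L) v) := by
        rw [uIcc_of_le (by linarith)]
        intro x hx
        simp only
        rw [hul x hx]
        ring
      rw [intervalIntegral.integral_congr heq]
      have hd : ∀ x : ℝ, HasDerivAt (fun y => c^2/(3*L^2) * (y-(v-L))^3)
          ((c^2/L^2)*(x-(v-L))^2) x := by
        intro x
        have h1 : HasDerivAt (fun y : ℝ => y - (v-L)) 1 x := (hasDerivAt_id' x).sub_const _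
        have h2 := (h1.fun_pow 3).const_mul (c^2/(3*L^2))
        refine h2.congr_deriv ?_
        field_simp
        ring
      rw [intervalIntegral.integral_eq_sub_of_hasDerivAt (fun x _ => hd x)
        (((continuous_const.mul (((continuous_id.sub continuous_const).pow 2))).intervalIntegrable
          (v-L) v))]
      field_simp
      ring
    have hright : ∫ x in v..(v+L), (u x)^2 = c^2*L/3 := by
      have heq : EqOn (fun x => (u x)^2) (fun x => (c^2/L^2) * ((v+L) - x)^2)
          (Set.uIcc v (v+L)) := by
        rw [uIcc_of_le (by linarith)]
        intro x hx
        simp only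
        rw [hur x hx]
        ring
      rw [intervalIntegral.integral_congr heq]
      have hd : ∀ x : ℝ, HasDerivAt (fun y => -(c^2/(3*L^2)) * ((v+L)-y)^3)
          ((c^2/L^2)*((v+L)-x)^2) x := by
        intro x
        have h1 : HasDerivAt (fun y : ℝ => (v+L) - y) (-1) x := (hasDerivAt_id' x).const_sub _
        have h2 := (h1.fun_pow 3).const_mul (-(c^2/(3*L^2)))
        refine h2.congr_deriv ?_
        field_simp
        ring
      rw [intervalIntegral.integral_eq_sub_of_hasDerivAt (fun x _ => hd x)
        (((continuous_const.mul (((continuous_const.sub continuous_id).pow 2))).intervalIntegrable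
          v (v+L)))]
      field_simp
      ring
    rw [hsplit, hleft, hright]
    ring
  exact ⟨u, g, ⟨hu2int, hg2int, hftc⟩, hmass, hKval, huv⟩

lemma exists_negative_energy {V : Set ℝ} (hfin : V.Finite) {v : ℝ} (hv : v ∈ V) {q μ : ℝ}
    (hq : 2 < q) (hq' : q < 4) (hμ : 0 < μ) :
    ∃ u u' : ℝ → ℝ, InH1 u u' ∧ mass u = μ ∧ energy q V u u' < 0 := by
  have hq0 : (0:ℝ) < q := by linarith
  set s : ℝ := (q-2)/2 with hs
  have hs0 : 0 < s := by rw [hs]; exact div_pos (by linarith) two_pos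
  set β : ℝ := (4-q)/2 with hβ
  have hβ0 : 0 < β := by rw [hβ]; exact div_pos (by linarith) two_pos
  set m : ℝ := 3*μ/2 with hm
  have hm0 : 0 < m := by rw [hm]; linarith
  set R : ℝ := q * m ^ (-s) with hR
  have hR0 : 0 < R := mul_pos hq0 (Real.rpow_pos_of_pos hm0 _)
  set L : ℝ := max 1 ((R+1) ^ (β⁻¹)) with hL
  have hL1 : (1:ℝ) ≤ L := le_max_left _ _
  have hL0 : 0 < L := lt_of_lt_of_le zero_lt_one hL1
  have hLβ : R < L ^ β := by
    have h1 : (R+1) ^ (β⁻¹) ≤ L := le_max_right _ _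
    have h2 : ((R+1) ^ (β⁻¹)) ^ β ≤ L ^ β :=
      Real.rpow_le_rpow (Real.rpow_nonneg (by linarith) _) h1 hβ0.le
    have h3 : ((R+1) ^ (β⁻¹)) ^ β = R+1 := by
      rw [← Real.rpow_mul (by linarith : (0:ℝ) ≤ R+1), inv_mul_cancel₀ hβ0.ne', Real.rpow_one]
    linarith
  set c : ℝ := Real.sqrt (m / L) with hc
  have hmL : 0 < m / L := div_pos hm0 hL0
  have hc0 : 0 < c := Real.sqrt_pos.2 hmL
  have hc2 : c^2 = m / L := Real.sq_sqrt hmL.le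
  obtain ⟨u, g, hIn, hmass, hK, huv⟩ := tent_facts (v := v) hL0 hc0
  refine ⟨u, g, hIn, ?_, ?_⟩
  · rw [hmass, hc2, hm]
    field_simp
  · rw [energy, hK]
    have hterm : c ^ q ≤ ∑' w : V, |u (w:ℝ)| ^ q := by
      haveI := hfin.fintype
      have hsummable : Summable (fun w : V => |u (w:ℝ)| ^ q) := Summable.of_finite
      have h := hsummable.le_tsum ⟨v, hv⟩
        (fun j _ => Real.rpow_nonneg (abs_nonneg _) q)
      simpa [huv, abs_of_pos hc0] using h
    have hcq : c ^ q = c^2 * c ^ (q-2) := by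
      have : (c:ℝ)^2 = c ^ (2:ℝ) := by
        rw [← Real.rpow_natCast c 2]; norm_num
      rw [this, ← Real.rpow_add hc0]; norm_num
    have hcs : c ^ (q-2) = m ^ s * L ^ (-s) := by
      have h1 : c = (m/L) ^ ((1:ℝ)/2) := by rw [hc, Real.sqrt_eq_rpow]
      rw [h1, ← Real.rpow_mul hmL.le]
      have h2 : (1:ℝ)/2 * (q-2) = s := by rw [hs]; ring
      rw [h2, Real.div_rpow hm0.le hL0.le, Real.rpow_neg hL0.le, div_eq_mul_inv]
    have hkey : q / L < c ^ (q-2) := by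
      rw [hcs, div_lt_iff₀ hL0]
      have h1 : m ^ s * R < m ^ s * L ^ β :=
        mul_lt_mul_of_pos_left hLβ (Real.rpow_pos_of_pos hm0 _)
      have h2 : m ^ s * R = q := by
        rw [hR, mul_comm q, ← mul_assoc, ← Real.rpow_add hm0]
        simp
      have hLβs : L ^ β = L ^ (-s) * L := by
        have hβe : β = -s + 1 := by rw [hβ, hs]; ring
        rw [hβe, Real.rpow_add hL0, Real.rpow_one]
      rw [h2, hLβs] at h1
      linarith [h1, mul_assoc (m^s) (L^(-s)) L]
    have hfrac : (1/q) * (c^2 * (q/L)) = c^2/L := by field_simp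
    have h2 : c^2 * (q/L) < c^2 * c^(q-2) := mul_lt_mul_of_pos_left hkey (by positivity)
    have h3 : (1/q) * (c^2 * (q/L)) < (1/q) * (c^2 * c^(q-2)) :=
      mul_lt_mul_of_pos_left h2 (by positivity)
    have h4 : (1/q) * c^q ≤ (1/q) * ∑' w : V, |u (w:ℝ)| ^ q :=
      mul_le_mul_of_nonneg_left hterm (by positivity)
    rw [hcq] at h4
    have h5 : (1/2) * (2*c^2/L) = c^2/L := by ring
    rw [h5]
    rw [hfrac] at h3
    linarith

open scoped ENNReal

lemma memLp_intervalIntegrable {f : ℝ → ℝ} (hf : MemLp f 2 (volume : Measure ℝ)) :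
    ∀ a b : ℝ, IntervalIntegrable f volume a b := by
  have h : ∀ c d : ℝ, IntegrableOn f (Ioc c d) volume := by
    intro c d
    haveI : IsFiniteMeasure (volume.restrict (Ioc c d)) := by
      constructor
      rw [Measure.restrict_apply_univ, Real.volume_Ioc]
      exact ENNReal.ofReal_lt_top
    exact (hf.restrict (Ioc c d)).integrable (by norm_num)
  exact fun a b => ⟨h a b, h b a⟩

lemma inner_eq_integral (f g : Lp ℝ 2 (volume : Measure ℝ)) :
    ⟪f, g⟫ = ∫ x : ℝ, f x * g x := by
  rw [MeasureTheory.L2.inner_def]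
  apply MeasureTheory.integral_congr_ae
  apply Filter.Eventually.of_forall
  intro x
  simp [RCLike.inner_apply, mul_comm]

set_option maxHeartbeats 1600000 in
theorem stmt4' (V : Set ℝ) (hfin : V.Finite) (hne : V.Nonempty) (q μ : ℝ)
    (hq : 2 < q) (hq' : q < 4) (hμ : 0 < μ) :
    sInf (levelSet q V μ) < 0 ∧
      ∃ u u' : ℝ → ℝ, InH1 u u' ∧ mass u = μ ∧
        energy q V u u' = sInf (levelSet q V μ) := by
  classical
  obtain ⟨v, hv⟩ := hne
  have hq0 : (0:ℝ) < q := by linarith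
  haveI : Fact ((2:ℝ≥0∞) ≠ ∞) := ⟨by norm_num⟩
  haveI := hfin.fintype
  obtain ⟨u₀, u₀', hIn₀, hm₀, hE₀⟩ := exists_negative_energy hfin hv hq hq' hμ
  have hmem₀ : energy q V u₀ u₀' ∈ levelSet q V μ := ⟨u₀, u₀', hIn₀, hm₀, rfl⟩
  obtain ⟨C, hC0, hCbound⟩ := energy_lower_bound hfin hq hq' hμ
  have hbdd : BddBelow (levelSet q V μ) := by
    refine ⟨-C, fun E hE => ?_⟩
    obtain ⟨u, u', h, hm, rfl⟩ := hE
    have h1 := hCbound u u' h hm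
    have hKnn : 0 ≤ ∫ x : ℝ, (u' x)^2 := integral_nonneg fun _ => sq_nonneg _
    linarith
  have hNE : (levelSet q V μ).Nonempty := ⟨_, hmem₀⟩
  set E0 : ℝ := sInf (levelSet q V μ) with hE0def
  have hE0neg : E0 < 0 := lt_of_le_of_lt (csInf_le hbdd hmem₀) hE₀
  refine ⟨hE0neg, ?_⟩
  -- minimizing sequence
  have hseq : ∀ k : ℕ, ∃ u u' : ℝ → ℝ, InH1 u u' ∧ mass u = μ ∧
      energy q V u u' < E0 + min (1/((k:ℝ)+1)) (-E0) := by
    intro k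
    have hpos : 0 < min (1/((k:ℝ)+1)) (-E0) := lt_min (by positivity) (by linarith)
    obtain ⟨E, hEmem, hElt⟩ := exists_lt_of_csInf_lt hNE (by linarith : E0 < E0 + min (1/((k:ℝ)+1)) (-E0))
    obtain ⟨u, u', h, hm, rfl⟩ := hEmem
    exact ⟨u, u', h, hm, hElt⟩
  choose U U' hU hUm hUE using hseq
  have hEk_lt0 : ∀ k, energy q V (U k) (U' k) < 0 := by
    intro k
    have h1 : min (1/((k:ℝ)+1)) (-E0) ≤ -E0 := min_le_right _ _
    have := hUE k
    linarith
  have hEk_ge : ∀ k, E0 ≤ energy q V (U k) (U' k) := fun k =>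
    csInf_le hbdd ⟨U k, U' k, hU k, hUm k, rfl⟩
  have hEk_tendsto : Tendsto (fun k => energy q V (U k) (U' k)) atTop (𝓝 E0) := by
    have h1 : Tendsto (fun k : ℕ => E0 + 1/((k:ℝ)+1)) atTop (𝓝 (E0 + 0)) :=
      tendsto_const_nhds.add tendsto_one_div_add_atTop_nhds_zero_nat
    rw [add_zero] at h1
    apply tendsto_of_tendsto_of_tendsto_of_le_of_le tendsto_const_nhds h1 hEk_ge
    intro k
    have h2 : min (1/((k:ℝ)+1)) (-E0) ≤ 1/((k:ℝ)+1) := min_le_left _ _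
    have := hUE k
    linarith
  have hKk_bound : ∀ k, ∫ x : ℝ, (U' k x)^2 ≤ 4*C := by
    intro k
    have := hCbound (U k) (U' k) (hU k) (hUm k)
    have := hEk_lt0 k
    linarith
  have hKk_nn : ∀ k, 0 ≤ ∫ x : ℝ, (U' k x)^2 := fun k => integral_nonneg fun _ => sq_nonneg _
  -- basic facts about each U k
  have hUii : ∀ k, ∀ a b : ℝ, IntervalIntegrable (U' k) volume a b := fun k => by
    obtain ⟨x₀, hx₀⟩ := (hU k).nonzero (hUm k) hμ
    exact (hU k).intervalIntegrable hx₀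
  have hUcont : ∀ k, Continuous (U k) := fun k => (hU k).continuous (hUii k)
  have hUmemLp : ∀ k, MemLp (U' k) 2 (volume : Measure ℝ) := fun k =>
    (hU k).memLp2 (hUii k)
  -- move to L² space
  set F : ℕ → Lp ℝ 2 (volume : Measure ℝ) := fun k => (hUmemLp k).toLp (U' k) with hF
  have hFinner : ∀ k (g : Lp ℝ 2 (volume : Measure ℝ)),
      ⟪F k, g⟫ = ∫ x : ℝ, U' k x * g x := by
    intro k g
    rw [inner_eq_integral]
    apply MeasureTheory.integral_congr_ae
    filter_upwards [(hUmemLp k).coeFn_toLp] with x hx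
    rw [hF]
    simp only
    rw [hx]
  have hFnormsq : ∀ k, ⟪F k, F k⟫ = ∫ x : ℝ, (U' k x)^2 := by
    intro k
    rw [inner_eq_integral]
    apply MeasureTheory.integral_congr_ae
    filter_upwards [(hUmemLp k).coeFn_toLp] with x hx
    rw [hF]
    simp only
    rw [hx]
    ring
  have hFnorm : ∀ k, ‖F k‖ ≤ Real.sqrt (4*C) := by
    intro k
    rw [← Real.sqrt_sq (norm_nonneg (F k))]
    apply Real.sqrt_le_sqrt
    rw [← real_inner_self_eq_norm_sq, hFnormsq]
    exact hKk_bound k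
  obtain ⟨φ, w, hφ, hwnorm, hweak⟩ := exists_weak_limit F (Real.sqrt (4*C)) hFnorm
  -- bound on values at 0
  set B : ℝ := 2 * Real.sqrt (Real.sqrt (μ * (4*C))) with hBdef
  have hB : ∀ k, U k 0 ∈ Icc (-B) B := by
    intro k
    have h1 := (hU k).sup_bound (hUii k) (hUcont k) (hUm k) hμ 0
    have h2 : Real.sqrt (Real.sqrt (μ * ∫ y : ℝ, (U' k y)^2))
        ≤ Real.sqrt (Real.sqrt (μ * (4*C))) :=
      Real.sqrt_le_sqrt (Real.sqrt_le_sqrt (mul_le_mul_of_nonneg_left (hKk_bound k) hμ.le))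
    have h3 : |U k 0| ≤ B := by rw [hBdef]; linarith
    rw [mem_Icc]
    constructor <;> linarith [abs_le.1 h3|>.1, abs_le.1 h3|>.2]
  obtain ⟨clim, _, ψ, hψ, hclim⟩ := tendsto_subseq_of_bounded (Metric.isBounded_Icc (-B) B)
    (fun k => hB (φ k))
  set Φ : ℕ → ℕ := φ ∘ ψ with hΦ
  have hΦmono : StrictMono Φ := hφ.comp hψ
  have hweakΦ : ∀ g, Tendsto (fun k => ⟪F (Φ k), g⟫) atTop (𝓝 ⟪w, g⟫) := fun g =>
    (hweak g).comp hψ.tendsto_atTop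
  have hclim2 : Tendsto (fun k => U (Φ k) 0) atTop (𝓝 clim) := hclim
  -- interval integral convergence
  have hint_conv : ∀ a b : ℝ, Tendsto (fun k => ∫ t in a..b, U' (Φ k) t) atTop
      (𝓝 (∫ t in a..b, (⇑w) t)) := by
    have hle : ∀ a b : ℝ, a ≤ b → Tendsto (fun k => ∫ t in a..b, U' (Φ k) t) atTop
        (𝓝 (∫ t in a..b, (⇑w) t)) := by
      intro a b hab
      have hind : MemLp ((Ioc a b).indicator (fun _ => (1:ℝ))) 2 (volume : Measure ℝ) :=
        memLp_indicator_const 2 measurableSet_Ioc 1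
          (Or.inr (by rw [Real.volume_Ioc]; exact (ENNReal.ofReal_lt_top).ne))
      set G := hind.toLp _ with hG
      have hmul : ∀ (f : ℝ → ℝ),
          (fun x => f x * (Ioc a b).indicator (fun _ => (1:ℝ)) x) = (Ioc a b).indicator f := by
        intro f; funext x; by_cases hx : x ∈ Ioc a b
        · rw [indicator_of_mem hx, indicator_of_mem hx]; ring
        · rw [indicator_of_notMem hx, indicator_of_notMem hx]; ring
      have hFG : ∀ k, ⟪F k, G⟫ = ∫ t in a..b, U' k t := by
        intro k
        rw [inner_eq_integral, intervalIntegral.integral_of_le hab,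
          ← MeasureTheory.integral_indicator measurableSet_Ioc, ← hmul (U' k)]
        apply MeasureTheory.integral_congr_ae
        filter_upwards [(hUmemLp k).coeFn_toLp, hind.coeFn_toLp] with x h1 h2
        rw [hF]
        simp only
        rw [h1, h2]
      have hwG : ⟪w, G⟫ = ∫ t in a..b, (⇑w) t := by
        rw [inner_eq_integral, intervalIntegral.integral_of_le hab,
          ← MeasureTheory.integral_indicator measurableSet_Ioc, ← hmul (⇑w)]
        apply MeasureTheory.integral_congr_ae
        filter_upwards [hind.coeFn_toLp] with x h2
        rw [h2]
      have h := hweakΦ G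
      have heq : (fun k => ⟪F (Φ k), G⟫) = fun k => ∫ t in a..b, U' (Φ k) t :=
        funext fun k => hFG (Φ k)
      rw [heq, hwG] at h
      exact h
    intro a b
    rcases le_total a b with hab | hba
    · exact hle a b hab
    · have hrw : (fun k => ∫ t in a..b, U' (Φ k) t) = fun k => -∫ t in b..a, U' (Φ k) t :=
        funext fun k => intervalIntegral.integral_symm b a
      rw [hrw, show (∫ t in a..b, (⇑w) t) = -∫ t in b..a, (⇑w) t from
        intervalIntegral.integral_symm b a]
      exact (hle b a hba).neg
  -- pointwise convergence
  set uu : ℝ → ℝ := fun x => clim + ∫ t in (0:ℝ)..x, (⇑w) t with huu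
  have hpt : ∀ x, Tendsto (fun k => U (Φ k) x) atTop (𝓝 (uu x)) := by
    intro x
    have h1 : ∀ k : ℕ, U (Φ k) x = U (Φ k) 0 + ∫ t in (0:ℝ)..x, U' (Φ k) t := by
      intro k
      have := (hU (Φ k)).2.2 0 x
      linarith
    have h2 : Tendsto (fun k => U (Φ k) 0 + ∫ t in (0:ℝ)..x, U' (Φ k) t) atTop
        (𝓝 (clim + ∫ t in (0:ℝ)..x, (⇑w) t)) := hclim2.add (hint_conv 0 x)
    exact h2.congr (fun k => (h1 k).symm)
  -- convergence of potential terms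
  set Pk : ℕ → ℝ := fun k => (1/q) * ∑' v' : V, |U (Φ k) (v':ℝ)| ^ q with hPk
  set Pinf : ℝ := (1/q) * ∑' v' : V, |uu (v':ℝ)| ^ q with hPinf
  have hPconv : Tendsto Pk atTop (𝓝 Pinf) := by
    rw [hPk, hPinf]
    apply Tendsto.const_mul
    have hfun : (fun k => ∑' v' : V, |U (Φ k) (v':ℝ)| ^ q)
        = fun k => ∑ v' : V, |U (Φ k) (v':ℝ)| ^ q := funext fun k => tsum_fintype _
    rw [hfun, tsum_fintype]
    apply tendsto_finset_sum
    intro v' _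
    have h1 : Tendsto (fun k => |U (Φ k) (v':ℝ)|) atTop (𝓝 |uu (v':ℝ)|) := (hpt (v':ℝ)).abs
    have h2 : ContinuousAt (fun t : ℝ => t ^ q) |uu (v':ℝ)| :=
      Real.continuousAt_rpow_const _ _ (Or.inr hq0.le)
    exact h2.tendsto.comp h1
  -- kinetic terms
  set Kk : ℕ → ℝ := fun k => ∫ x : ℝ, (U' (Φ k) x)^2 with hKkdef
  have hEΦ : Tendsto (fun k => energy q V (U (Φ k)) (U' (Φ k))) atTop (𝓝 E0) :=
    hEk_tendsto.comp hΦmono.tendsto_atTop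
  have hKconv : Tendsto Kk atTop (𝓝 (2*(E0 + Pinf))) := by
    have h1 : ∀ k, Kk k = 2*(energy q V (U (Φ k)) (U' (Φ k)) + Pk k) := by
      intro k
      rw [hKkdef, hPk]
      simp only [energy]
      ring
    have h2 : Tendsto (fun k => 2*(energy q V (U (Φ k)) (U' (Φ k)) + Pk k)) atTop
        (𝓝 (2*(E0 + Pinf))) := (hEΦ.add hPconv).const_mul 2
    exact h2.congr (fun k => (h1 k).symm)
  -- weak lower semicontinuity
  set Iinf : ℝ := ∫ x : ℝ, ((⇑w) x)^2 with hIinf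
  have hwinner_self : ⟪w, w⟫ = Iinf := by
    rw [inner_eq_integral, hIinf]
    congr 1
    funext x
    ring
  have hFw_conv : Tendsto (fun k => ⟪F (Φ k), w⟫) atTop (𝓝 Iinf) := by
    rw [← hwinner_self]; exact hweakΦ w
  have hCS : ∀ k, ⟪F (Φ k), w⟫^2 ≤ Kk k * Iinf := by
    intro k
    have h2 : ⟪F (Φ k), w⟫^2 ≤ (‖F (Φ k)‖*‖w‖)^2 := by
      rw [← sq_abs]
      apply pow_le_pow_left₀ (abs_nonneg _) (abs_real_inner_le_norm _ _)
    have h3 : (‖F (Φ k)‖*‖w‖)^2 = ⟪F (Φ k), F (Φ k)⟫ * ⟪w,w⟫ := by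
      rw [real_inner_self_eq_norm_sq, real_inner_self_eq_norm_sq]; ring
    rw [h3, hFnormsq (Φ k), hwinner_self] at h2
    exact h2
  have hKlim_nn : 0 ≤ 2*(E0 + Pinf) :=
    ge_of_tendsto' hKconv (fun k => hKk_nn (Φ k))
  have hIinf_nn : 0 ≤ Iinf := integral_nonneg fun x => sq_nonneg _
  have hI_le : Iinf ≤ 2*(E0 + Pinf) := by
    have hIsq : Iinf^2 ≤ (2*(E0+Pinf)) * Iinf := by
      have h1 : Tendsto (fun k => ⟪F (Φ k), w⟫^2) atTop (𝓝 (Iinf^2)) := hFw_conv.pow 2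
      have h2 : Tendsto (fun k => Kk k * Iinf) atTop (𝓝 (2*(E0+Pinf) * Iinf)) :=
        hKconv.mul_const Iinf
      exact le_of_tendsto_of_tendsto' h1 h2 hCS
    rcases eq_or_lt_of_le hIinf_nn with h0 | hpos
    · linarith
    · nlinarith [hIsq, hpos]
  -- structure of uu
  have hwII : ∀ a b : ℝ, IntervalIntegrable (⇑w) volume a b :=
    memLp_intervalIntegrable (Lp.memLp w)
  have huucont : Continuous uu := by
    rw [huu]
    exact continuous_const.add (intervalIntegral.continuous_primitive hwII 0)
  have hftcinf : ∀ a b : ℝ, uu b - uu a = ∫ x in a..b, (⇑w) x := by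
    intro a b
    have h := intervalIntegral.integral_interval_sub_left (hwII 0 b) (hwII 0 a)
    rw [huu]
    simp only
    linarith
  have hw2int : Integrable (fun x => ((⇑w) x)^2) (volume : Measure ℝ) :=
    (Lp.memLp w).integrable_sq
  -- Fatou
  have hfatou : ∫⁻ x, ENNReal.ofReal ((uu x)^2) ≤ ENNReal.ofReal μ := by
    have hlim : ∀ x, Tendsto (fun k => ENNReal.ofReal ((U (Φ k) x)^2)) atTop
        (𝓝 (ENNReal.ofReal ((uu x)^2))) := fun x =>
      (ENNReal.continuous_ofReal.tendsto _).comp ((hpt x).pow 2)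
    have hmeas : ∀ k : ℕ, Measurable fun x => ENNReal.ofReal ((U (Φ k) x)^2) := fun k =>
      (((hUcont (Φ k)).pow 2).measurable).ennreal_ofReal
    calc ∫⁻ x, ENNReal.ofReal ((uu x)^2)
        = ∫⁻ x, liminf (fun k => ENNReal.ofReal ((U (Φ k) x)^2)) atTop := by
          apply lintegral_congr
          intro x
          exact ((hlim x).liminf_eq).symm
      _ ≤ liminf (fun k => ∫⁻ x, ENNReal.ofReal ((U (Φ k) x)^2)) atTop :=
          lintegral_liminf_le hmeas
      _ = ENNReal.ofReal μ := by
          have heach : ∀ k : ℕ, ∫⁻ x, ENNReal.ofReal ((U (Φ k) x)^2) = ENNReal.ofReal μ := by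
            intro k
            rw [← MeasureTheory.ofReal_integral_eq_lintegral_ofReal ((hU (Φ k)).1)
              (Filter.Eventually.of_forall fun x => sq_nonneg _)]
            congr 1
            exact hUm (Φ k)
          rw [funext heach]
          exact liminf_const _
  have huu2meas : AEStronglyMeasurable (fun x => (uu x)^2) (volume : Measure ℝ) :=
    (huucont.pow 2).aestronglyMeasurable
  have huu2int : Integrable (fun x => (uu x)^2) (volume : Measure ℝ) := by
    refine ⟨huu2meas, ?_⟩
    rw [hasFiniteIntegral_iff_ofReal (Filter.Eventually.of_forall fun x => sq_nonneg _)]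
    exact lt_of_le_of_lt hfatou ENNReal.ofReal_lt_top
  have hminf_le : mass uu ≤ μ := by
    rw [mass, MeasureTheory.integral_eq_lintegral_of_nonneg_ae
      (Filter.Eventually.of_forall fun x => sq_nonneg _) huu2meas]
    exact ENNReal.toReal_le_of_le_ofReal hμ.le hfatou
  have hIninf : InH1 uu ⇑w := ⟨huu2int, hw2int, hftcinf⟩
  have hEinf : energy q V uu ⇑w = (1/2)*Iinf - Pinf := by
    rw [energy, hIinf, hPinf]
  have hEinf_le : energy q V uu ⇑w ≤ E0 := by
    rw [hEinf]
    linarith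
  -- Pinf is positive
  have hPinf_ge : -E0 ≤ Pinf := by
    have h1 : ∀ k, -(energy q V (U (Φ k)) (U' (Φ k))) ≤ Pk k := by
      intro k
      have hKnn := hKk_nn (Φ k)
      have h2 : energy q V (U (Φ k)) (U' (Φ k)) = (1/2)*(∫ x : ℝ, (U' (Φ k) x)^2) - Pk k := by
        rw [energy, hPk]
      linarith
    exact le_of_tendsto_of_tendsto' hEΦ.neg hPconv h1
  have hPinf_pos : 0 < Pinf := lt_of_lt_of_le (by linarith) hPinf_ge
  -- mass is positive
  have hminf_nn : 0 ≤ mass uu := integral_nonneg fun x => sq_nonneg _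
  have hminf_pos : 0 < mass uu := by
    rcases hminf_nn.lt_or_eq with h | h
    · exact h
    · exfalso
      have hae : (fun x => (uu x)^2) =ᵐ[volume] 0 :=
        (integral_eq_zero_iff_of_nonneg (fun x => sq_nonneg _) huu2int).1 h.symm
      have hzero : (fun x => (uu x)^2) = 0 :=
        (Continuous.ae_eq_iff_eq volume (huucont.pow 2) continuous_const).1 hae
      have huu0 : ∀ x, uu x = 0 := by
        intro x
        have := congrFun hzero x
        simp only [Pi.zero_apply] at this
        exact pow_eq_zero_iff (by norm_num : 2 ≠ 0) |>.1 this
      have hP0 : Pinf = 0 := by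
        rw [hPinf]
        have : ∀ v' : V, |uu (v':ℝ)| ^ q = 0 := by
          intro v'
          rw [huu0, abs_zero, Real.zero_rpow hq0.ne']
        rw [tsum_congr this]
        simp
      linarith
  -- mass uu = μ
  have hminf : mass uu = μ := by
    by_contra hnem
    have hlt : mass uu < μ := lt_of_le_of_ne hminf_le hnem
    set t := Real.sqrt (μ / mass uu) with ht
    have hdivpos : 0 < μ / mass uu := div_pos hμ hminf_pos
    have ht0 : 0 < t := Real.sqrt_pos.2 hdivpos
    have ht2 : t^2 = μ / mass uu := Real.sq_sqrt hdivpos.le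
    have ht1 : 1 < t := by
      rw [ht]
      apply (Real.lt_sqrt (by norm_num : (0:ℝ) ≤ 1)).2
      rw [one_pow]
      exact (one_lt_div hminf_pos).2 hlt
    have hIn_t : InH1 (fun x => t * uu x) (fun x => t * (⇑w) x) := hIninf.scale t
    have hmass_t : mass (fun x => t * uu x) = μ := by
      rw [mass_scale, ht2]
      field_simp
    have hE_t : energy q V (fun x => t*uu x) (fun x => t*(⇑w) x)
        = t^2*((1/2) * ∫ x : ℝ, ((⇑w) x)^2) - |t|^q * ((1/q) * ∑' v' : V, |uu (v':ℝ)| ^ q) :=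
      energy_scale q V uu ⇑w t
    have hmem_t : energy q V (fun x => t*uu x) (fun x => t*(⇑w) x) ∈ levelSet q V μ :=
      ⟨_, _, hIn_t, hmass_t, rfl⟩
    have hge := csInf_le hbdd hmem_t
    have htq : t^2 ≤ |t|^q := by
      rw [abs_of_pos ht0]
      have h1 : t^(2:ℝ) ≤ t^q := Real.rpow_le_rpow_of_exponent_le ht1.le (by linarith)
      have h2 : t^(2:ℝ) = t^(2:ℕ) := by
        rw [← Real.rpow_natCast t 2]
        norm_num
      rw [h2] at h1
      exact_mod_cast h1
    have hEt_lt : energy q V (fun x => t*uu x) (fun x => t*(⇑w) x) < E0 := by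
      rw [hE_t, ← hIinf, ← hPinf]
      have h4 : (1/2)*Iinf - Pinf ≤ E0 := by linarith
      have ht2gt : 1 < t^2 := by nlinarith [ht1]
      have ht2nn : (0:ℝ) ≤ t^2 := by positivity
      calc t^2*((1/2)*Iinf) - |t|^q*Pinf
          ≤ t^2*((1/2)*Iinf) - t^2*Pinf := by
            have := mul_le_mul_of_nonneg_right htq hPinf_pos.le
            linarith
        _ = t^2 * ((1/2)*Iinf - Pinf) := by ring
        _ ≤ t^2 * E0 := mul_le_mul_of_nonneg_left h4 ht2nn
        _ < E0 := by nlinarith [ht2gt, hE0neg]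
    linarith
  exact ⟨uu, ⇑w, hIninf, hminf, le_antisymm hEinf_le (csInf_le hbdd ⟨uu, ⇑w, hIninf, hminf, rfl⟩)⟩


/-- For every finite nonempty `V ⊂ ℝ`, `q ∈ (2,4)` and `μ > 0`, the ground-state
level is strictly negative and a ground state of mass `μ` exists. -/
theorem stmt4 (V : Set ℝ) (hfin : V.Finite) (hne : V.Nonempty) (q μ : ℝ)
    (hq : 2 < q) (hq' : q < 4) (hμ : 0 < μ) :
    sInf (levelSet q V μ) < 0 ∧
      ∃ u u' : ℝ → ℝ, InH1 u u' ∧ mass u = μ ∧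
        energy q V u u' = sInf (levelSet q V μ) := by
  exact stmt4' V hfin hne q μ hq hq' hμ
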